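/- Fix real numbers ℓ > 0 and L ≥ 2ℓ, and define q : ℝ → ℝ by q(x) = cos((x−ℓ)π/(4ℓ)) if |x| ≤ ℓ, q(x) = 1 if ℓ < x < L−ℓ, q(x) = cos((x−(L−ℓ))π/(4ℓ)) if |x−L| ≤ ℓ, and q(x) = 0 otherwise. Let d ≥ 1 and define h : ℝ^d → ℝ by h(x) = ∏_{α=1}^d q(x_α). Let φ : ℝ^d → ℂ be measurable, periodic with period L in each coordinate (φ(x + L e_α) = φ(x) for every standard basis vector e_α and every x), and with ∫_{[0,L]^d} |φ|² < ∞. Then ∫_{[−ℓ, L+ℓ]^d} h(x)² |φ(x)|² dx = ∫_{[0,L]^d} |φ(x)|² dx. -/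

import Mathlib

open MeasureTheory

section Helpers
open Set

lemma lintegral_pi_prod : ∀ (n : ℕ) (G : Fin n → ℝ → ENNReal), (∀ i, Measurable (G i)) →
    (∫⁻ x : Fin n → ℝ, ∏ i, G i (x i) ∂(Measure.pi fun _ => (volume : Measure ℝ)))
      = ∏ i, ∫⁻ t, G i t := by
  intro n
  induction n with
  | zero =>
      intro G hG
      rw [Measure.pi_of_empty (fun _ => volume)]
      simp
  | succ m ih =>
      intro G hG
      have hmp := measurePreserving_piFinSuccAbove
        (fun _ : Fin (m + 1) => (volume : Measure ℝ)) 0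
      have hmeas : Measurable fun p : ℝ × (Fin m → ℝ) =>
          G 0 p.1 * ∏ i, G (Fin.succAbove 0 i) (p.2 i) :=
        ((hG 0).comp measurable_fst).mul <|
          Finset.measurable_prod _ fun i _ =>
            (hG _).comp ((measurable_pi_apply i).comp measurable_snd)
      have key : (∫⁻ x : Fin (m+1) → ℝ, ∏ i, G i (x i) ∂(Measure.pi fun _ => volume))
          = ∫⁻ p : ℝ × (Fin m → ℝ),
              G 0 p.1 * ∏ i, G (Fin.succAbove 0 i) (p.2 i)
              ∂((volume : Measure ℝ).prod (Measure.pi fun _ => volume)) := by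
        refine Eq.trans ?_ (hmp.lintegral_comp hmeas)
        refine lintegral_congr fun x => ?_
        rw [Fin.prod_univ_succAbove (fun i => G i (x i)) 0]
        rfl
      rw [key, lintegral_prod_mul (f := G 0)
        (g := fun y : Fin m → ℝ => ∏ i, G (Fin.succAbove 0 i) (y i)) (hG 0).aemeasurable
        (Finset.measurable_prod _ fun i _ => (hG _).comp (measurable_pi_apply i)).aemeasurable,
        ih _ fun i => hG _, ← Fin.prod_univ_succAbove (fun i => ∫⁻ t, G i t) 0]

lemma pi_restrict' (d : ℕ) (s : Set ℝ) (hs : MeasurableSet s) :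
    Measure.pi (fun _ : Fin d => (volume : Measure ℝ).restrict s)
      = (Measure.pi fun _ : Fin d => (volume : Measure ℝ)).restrict (Set.univ.pi fun _ => s) := by
  refine Measure.pi_eq fun t ht => ?_
  rw [Measure.restrict_apply (MeasurableSet.univ_pi ht), ← Set.pi_inter_distrib, Measure.pi_pi]
  exact Finset.prod_congr rfl fun i _ => (Measure.restrict_apply (ht i)).symm

lemma pi_withDensity' (d : ℕ) (g : ℝ → ENNReal) (hg : Measurable g)
    [SigmaFinite ((volume : Measure ℝ).withDensity g)] :
    Measure.pi (fun _ : Fin d => (volume : Measure ℝ).withDensity g)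
      = (Measure.pi fun _ : Fin d => (volume : Measure ℝ)).withDensity
          fun x => ∏ i, g (x i) := by
  refine Measure.pi_eq fun t ht => ?_
  have hpt : ∀ x : Fin d → ℝ, (Set.univ.pi t).indicator (fun x => ∏ i, g (x i)) x
      = ∏ i, (t i).indicator g (x i) := by
    intro x
    by_cases hx : x ∈ Set.univ.pi t
    · rw [Set.indicator_of_mem hx]
      exact Finset.prod_congr rfl fun i _ =>
        (Set.indicator_of_mem (hx i (Set.mem_univ i)) g).symm
    · rw [Set.indicator_of_notMem hx]
      have : ∃ i, x i ∉ t i := by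
        by_contra hc
        push_neg at hc
        exact hx fun i _ => hc i
      obtain ⟨i, hi⟩ := this
      exact (Finset.prod_eq_zero (Finset.mem_univ i)
        (Set.indicator_of_notMem hi g)).symm
  have h1 : ((Measure.pi fun _ : Fin d => (volume : Measure ℝ)).withDensity
        fun x => ∏ i, g (x i)) (Set.univ.pi t)
      = ∫⁻ x : Fin d → ℝ, ∏ i, (t i).indicator g (x i)
          ∂(Measure.pi fun _ => (volume : Measure ℝ)) := by
    rw [withDensity_apply _ (MeasurableSet.univ_pi ht),
      ← lintegral_indicator (MeasurableSet.univ_pi ht) _]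
    exact lintegral_congr hpt
  rw [h1, lintegral_pi_prod d _ fun i => hg.indicator (ht i)]
  exact Finset.prod_congr rfl fun i _ => by
    rw [withDensity_apply _ (ht i), ← lintegral_indicator (ht i) _]


lemma one_dim_mp (ℓ L : ℝ) (hℓ : 0 < ℓ) (hL : 2 * ℓ ≤ L) (q : ℝ → ℝ)
    (hq1 : ∀ x : ℝ, |x| ≤ ℓ → q x = Real.cos ((x - ℓ) * Real.pi / (4 * ℓ)))
    (hq2 : ∀ x : ℝ, ℓ < x → x < L - ℓ → q x = 1)
    (hq3 : ∀ x : ℝ, |x - L| ≤ ℓ → q x = Real.cos ((x - (L - ℓ)) * Real.pi / (4 * ℓ)))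
    (hq4 : ∀ x : ℝ, ¬ |x| ≤ ℓ → ¬ (ℓ < x ∧ x < L - ℓ) → ¬ |x - L| ≤ ℓ → q x = 0)
    (hqm : Measurable q) :
    MeasurePreserving (fun t : ℝ => t - L * ⌊t / L⌋)
      ((volume : Measure ℝ).withDensity fun t => ENNReal.ofReal (q t ^ 2))
      ((volume : Measure ℝ).restrict (Set.Ico 0 L)) := by
  have hℓ0 : ℓ ≠ 0 := ne_of_gt hℓ
  have hL0 : (0:ℝ) < L := by linarith
  have hlL : ℓ < L := by linarith
  have hmid : ℓ ≤ L - ℓ := by linarith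
  set g : ℝ → ENNReal := fun t => ENNReal.ofReal (q t ^ 2) with hg_def
  have hgm : Measurable g := ENNReal.measurable_ofReal.comp (hqm.pow_const 2)
  set T : ℝ → ℝ := fun t => t - L * ⌊t / L⌋ with hT_def
  have hTm : Measurable T := by
    apply measurable_id.sub
    exact measurable_const.mul (measurable_from_top.comp ((measurable_id.div_const L).floor))
  -- floor values
  have hfloor0 : ∀ t : ℝ, 0 ≤ t → t < L → ⌊t / L⌋ = 0 := by
    intro t h1 h2
    rw [Int.floor_eq_iff]
    constructor
    · exact_mod_cast div_nonneg h1 hL0.le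
    · push_cast
      rw [zero_add]
      exact (div_lt_one hL0).2 h2
  have hfloorm : ∀ t : ℝ, -ℓ ≤ t → t < 0 → ⌊t / L⌋ = -1 := by
    intro t h1 h2
    rw [Int.floor_eq_iff]
    push_cast
    constructor
    · rw [neg_le, ← neg_div]
      apply (div_le_one hL0).2
      linarith
    · rw [neg_add_cancel]
      exact div_neg_of_neg_of_pos h2 hL0
  have hfloor1 : ∀ t : ℝ, L ≤ t → t < L + ℓ → ⌊t / L⌋ = 1 := by
    intro t h1 h2
    rw [Int.floor_eq_iff]
    push_cast
    constructor
    · exact (le_div_iff₀ hL0).2 (by linarith)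
    · exact (div_lt_iff₀ hL0).2 (by linarith)
  have hT1 : ∀ t : ℝ, -ℓ ≤ t → t < 0 → T t = t + L := by
    intro t h1 h2; simp only [hT_def, hfloorm t h1 h2]; push_cast; ring
  have hT2 : ∀ t : ℝ, 0 ≤ t → t < L → T t = t := by
    intro t h1 h2; simp only [hT_def, hfloor0 t h1 h2]; push_cast; ring
  have hT3 : ∀ t : ℝ, L ≤ t → t < L + ℓ → T t = t - L := by
    intro t h1 h2; simp only [hT_def, hfloor1 t h1 h2]; push_cast; ring
  -- q vanishes outside [-ℓ, L+ℓ)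
  have hq0 : ∀ t : ℝ, t < -ℓ ∨ L + ℓ ≤ t → g t = 0 := by
    intro t ht
    have hq : q t = 0 := by
      rcases ht with ht | ht
      · apply hq4
        · rw [abs_le]; push_neg; intro hc; linarith
        · push_neg; intro hc; linarith
        · rw [abs_le]; push_neg; intro hc; linarith
      · rcases eq_or_lt_of_le ht with ht' | ht'
        · rw [hq3 t (by rw [← ht']; rw [abs_le]; constructor <;> linarith)]
          have : (t - (L - ℓ)) * Real.pi / (4 * ℓ) = Real.pi / 2 := by
            rw [← ht']; field_simp; ring
          rw [this, Real.cos_pi_div_two]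
        · apply hq4
          · rw [abs_le]; push_neg; intro hc; linarith
          · push_neg; intro hc; linarith
          · rw [abs_le]; push_neg; intro hc; linarith
    simp [hg_def, hq]
  -- trigonometric identities
  have key1 : ∀ u : ℝ, 0 ≤ u → u < ℓ → g (u + L) + g u = 1 := by
    intro u h1 h2
    have hqu : q u = Real.cos ((u - ℓ) * Real.pi / (4 * ℓ)) :=
      hq1 u (by rw [abs_le]; constructor <;> linarith)
    have hquL : q (u + L) = Real.cos ((u - ℓ) * Real.pi / (4 * ℓ) + Real.pi / 2) := by
      rw [hq3 (u + L) (by rw [abs_le]; constructor <;> linarith)]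
      congr 1
      field_simp
      ring
    rw [hg_def]
    simp only
    rw [hqu, hquL, Real.cos_add_pi_div_two, neg_sq,
      ← ENNReal.ofReal_add (sq_nonneg _) (sq_nonneg _), Real.sin_sq_add_cos_sq,
      ENNReal.ofReal_one]
  have key2 : ∀ u : ℝ, ℓ ≤ u → u < L - ℓ → g u = 1 := by
    intro u h1 h2
    have hqu : q u = 1 := by
      rcases eq_or_lt_of_le h1 with h1' | h1'
      · rw [hq1 u (by rw [abs_le]; constructor <;> linarith)]
        rw [← h1']
        simp
      · exact hq2 u h1' h2
    simp [hg_def, hqu]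
  have key3 : ∀ u : ℝ, L - ℓ ≤ u → u < L → g u + g (u - L) = 1 := by
    intro u h1 h2
    have hqu : q u = Real.cos ((u - (L - ℓ)) * Real.pi / (4 * ℓ)) :=
      hq3 u (by rw [abs_le]; constructor <;> linarith)
    have hquL : q (u - L) = Real.cos ((u - (L - ℓ)) * Real.pi / (4 * ℓ) - Real.pi / 2) := by
      rw [hq1 (u - L) (by rw [abs_le]; constructor <;> linarith)]
      congr 1
      field_simp
      ring
    rw [hg_def]
    simp only
    rw [hqu, hquL, Real.cos_sub_pi_div_two,
      ← ENNReal.ofReal_add (sq_nonneg _) (sq_nonneg _), Real.cos_sq_add_sin_sq,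
      ENNReal.ofReal_one]
  refine ⟨hTm, ?_⟩
  refine Measure.ext fun s hs => ?_
  rw [Measure.map_apply hTm hs, withDensity_apply _ (hTm hs), Measure.restrict_apply hs,
    ← lintegral_indicator (hTm hs) _]
  set χ : ℝ → ENNReal := s.indicator (fun _ => 1) with hχ_def
  have hχm : Measurable χ := measurable_const.indicator hs
  -- decomposition
  have dec : ∀ t : ℝ, (T ⁻¹' s).indicator g t
      = (Ico (-ℓ) 0).indicator (fun u => χ (u + L) * g u) t
        + (Ico (0:ℝ) L).indicator (fun u => χ u * g u) t
        + (Ico L (L + ℓ)).indicator (fun u => χ (u - L) * g u) t := by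
    intro t
    have hind : (T ⁻¹' s).indicator g t = χ (T t) * g t := by
      by_cases h : T t ∈ s
      · rw [Set.indicator_of_mem (by exact h : t ∈ T ⁻¹' s), hχ_def,
          Set.indicator_of_mem h, one_mul]
      · rw [Set.indicator_of_notMem (by exact h : t ∉ T ⁻¹' s), hχ_def,
          Set.indicator_of_notMem h, zero_mul]
    rw [hind]
    by_cases h1 : t ∈ Ico (-ℓ) 0
    · rw [Set.indicator_of_mem h1, Set.indicator_of_notMem (by
        rw [mem_Ico]; push_neg; intro hc; linarith [h1.2]),
        Set.indicator_of_notMem (by rw [mem_Ico]; push_neg; intro hc; linarith [h1.2]),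
        hT1 t h1.1 h1.2]
      ring
    · by_cases h2 : t ∈ Ico (0:ℝ) L
      · rw [Set.indicator_of_notMem h1, Set.indicator_of_mem h2,
          Set.indicator_of_notMem (by rw [mem_Ico]; push_neg; intro hc; linarith [h2.2]),
          hT2 t h2.1 h2.2]
        ring
      · by_cases h3 : t ∈ Ico L (L + ℓ)
        · rw [Set.indicator_of_notMem h1, Set.indicator_of_notMem h2,
            Set.indicator_of_mem h3, hT3 t h3.1 h3.2]
          ring
        · rw [Set.indicator_of_notMem h1, Set.indicator_of_notMem h2,
            Set.indicator_of_notMem h3]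
          have : g t = 0 := by
            apply hq0
            simp only [mem_Ico, not_and, not_lt, not_le] at h1 h2 h3
            rcases lt_or_ge t (-ℓ) with hc | hc
            · exact Or.inl hc
            · right
              have := h1 hc
              have := h2 (by linarith)
              have := h3 (by linarith)
              linarith
          rw [this, mul_zero]
          ring
  rw [lintegral_congr dec]
  have m1 : Measurable fun u : ℝ => χ (u + L) * g u :=
    (hχm.comp (measurable_add_const L)).mul hgm
  have m2 : Measurable fun u : ℝ => χ u * g u := hχm.mul hgm
  have m3 : Measurable fun u : ℝ => χ (u - L) * g u :=
    (hχm.comp (measurable_sub_const L)).mul hgm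
  rw [lintegral_add_right _ ((m3.indicator measurableSet_Ico)),
    lintegral_add_right _ ((m2.indicator measurableSet_Ico))]
  -- shift the two boundary integrals
  have t1 : (∫⁻ t, (Ico (-ℓ) 0).indicator (fun u => χ (u + L) * g u) t)
      = ∫⁻ t, (Ico (L - ℓ) L).indicator (fun v => χ v * g (v - L)) t := by
    rw [← lintegral_add_right_eq_self
      ((Ico (L - ℓ) L).indicator fun v => χ v * g (v - L)) L]
    refine lintegral_congr fun t => ?_
    by_cases h : t ∈ Ico (-ℓ) 0
    · rw [Set.indicator_of_mem h, Set.indicator_of_mem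
        (by rw [mem_Ico]; constructor <;> [linarith [h.1]; linarith [h.2]]),
        add_sub_cancel_right]
    · rw [Set.indicator_of_notMem h, Set.indicator_of_notMem (by
        rw [mem_Ico]; push_neg
        rw [mem_Ico] at h; push_neg at h
        intro hc; linarith [h (by linarith)])]
  have t3 : (∫⁻ t, (Ico L (L + ℓ)).indicator (fun u => χ (u - L) * g u) t)
      = ∫⁻ t, (Ico 0 ℓ).indicator (fun v => χ v * g (v + L)) t := by
    rw [← lintegral_add_right_eq_self
      ((Ico 0 ℓ).indicator fun v => χ v * g (v + L)) (-L)]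
    refine lintegral_congr fun t => ?_
    by_cases h : t ∈ Ico L (L + ℓ)
    · rw [Set.indicator_of_mem h, Set.indicator_of_mem
        (by rw [mem_Ico]; constructor <;> [linarith [h.1]; linarith [h.2]])]
      norm_num [sub_eq_add_neg]
    · rw [Set.indicator_of_notMem h, Set.indicator_of_notMem (by
        rw [mem_Ico]; push_neg
        rw [mem_Ico] at h; push_neg at h
        intro hc; linarith [h (by linarith)])]
  rw [t1, t3]
  have mF1 : Measurable fun v : ℝ => (Ico (L - ℓ) L).indicator (fun v => χ v * g (v - L)) v :=
    (hχm.mul (hgm.comp (measurable_sub_const L))).indicator measurableSet_Ico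
  have mF2 : Measurable fun v : ℝ => (Ico (0:ℝ) L).indicator (fun u => χ u * g u) v :=
    m2.indicator measurableSet_Ico
  have mF3 : Measurable fun v : ℝ => (Ico (0:ℝ) ℓ).indicator (fun v => χ v * g (v + L)) v :=
    (hχm.mul (hgm.comp (measurable_add_const L))).indicator measurableSet_Ico
  have merge : (∫⁻ t, (Ico (L - ℓ) L).indicator (fun v => χ v * g (v - L)) t)
      + (∫⁻ t, (Ico (0:ℝ) L).indicator (fun u => χ u * g u) t)
      + (∫⁻ t, (Ico (0:ℝ) ℓ).indicator (fun v => χ v * g (v + L)) t)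
      = ∫⁻ t, ((Ico (L - ℓ) L).indicator (fun v => χ v * g (v - L)) t
          + (Ico (0:ℝ) L).indicator (fun u => χ u * g u) t
          + (Ico (0:ℝ) ℓ).indicator (fun v => χ v * g (v + L)) t) := by
    rw [lintegral_add_right _ mF3, lintegral_add_right _ mF2]
  have hr : ∀ u ∈ Ico (0:ℝ) L, (s ∩ Ico 0 L).indicator (1 : ℝ → ENNReal) u = χ u := by
    intro u hu
    by_cases hus : u ∈ s <;> simp [hχ_def, Set.indicator_apply, hus, hu]
  have comb : ∀ u : ℝ, (Ico (L - ℓ) L).indicator (fun v => χ v * g (v - L)) u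
      + (Ico (0:ℝ) L).indicator (fun u => χ u * g u) u
      + (Ico (0:ℝ) ℓ).indicator (fun v => χ v * g (v + L)) u
      = (s ∩ Ico 0 L).indicator (1 : ℝ → ENNReal) u := by
    intro u
    by_cases hu0 : u ∈ Ico (0:ℝ) L
    · rw [hr u hu0, Set.indicator_of_mem hu0]
      rcases lt_or_ge u ℓ with h | h
      · rw [Set.indicator_of_notMem (by
          rw [mem_Ico]; push_neg; intro hc; linarith),
          Set.indicator_of_mem (by rw [mem_Ico]; exact ⟨hu0.1, h⟩)]
        calc 0 + χ u * g u + χ u * g (u + L) = χ u * (g (u + L) + g u) := by ring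
          _ = χ u := by rw [key1 u hu0.1 h, mul_one]
      · rcases lt_or_ge u (L - ℓ) with h' | h'
        · rw [Set.indicator_of_notMem (by
            rw [mem_Ico]; push_neg; intro hc; linarith),
            Set.indicator_of_notMem (by
            rw [mem_Ico]; push_neg; intro hc; linarith)]
          rw [key2 u h h', mul_one, zero_add, add_zero]
        · rw [Set.indicator_of_mem (by rw [mem_Ico]; exact ⟨h', hu0.2⟩),
            Set.indicator_of_notMem (by
            rw [mem_Ico]; push_neg; intro hc; linarith)]
          calc χ u * g (u - L) + χ u * g u + 0 = χ u * (g u + g (u - L)) := by ring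
            _ = χ u := by rw [key3 u h' hu0.2, mul_one]
    · rw [mem_Ico] at hu0; push_neg at hu0
      rw [Set.indicator_of_notMem (by
          rw [mem_Ico]; push_neg; intro hc; linarith [hu0 (by linarith)]),
        Set.indicator_of_notMem (by
          rw [mem_Ico]; push_neg; intro hc; exact hu0 hc),
        Set.indicator_of_notMem (by
          rw [mem_Ico]; push_neg; intro hc; linarith [hu0 hc]),
        Set.indicator_of_notMem (by
          rw [mem_inter_iff, mem_Ico]; push_neg; intro _ hc; exact hu0 hc)]
      simp
  rw [merge, lintegral_congr comb, lintegral_indicator_one (hs.inter measurableSet_Ico)]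

end Helpers

open Set in
/-- The `d`-dimensional cosine cutoff `h(x) = ∏ q(x_α)` maps an `L`-periodic
function `φ` on `[0,L]^d` isometrically (in `L²`) to a function on `[−ℓ, L+ℓ]^d`. -/
theorem cosine_cutoff_isometry_multidim
    (ℓ L : ℝ) (hℓ : 0 < ℓ) (hL : 2 * ℓ ≤ L)
    (q : ℝ → ℝ)
    (hq1 : ∀ x : ℝ, |x| ≤ ℓ → q x = Real.cos ((x - ℓ) * Real.pi / (4 * ℓ)))
    (hq2 : ∀ x : ℝ, ℓ < x → x < L - ℓ → q x = 1)
    (hq3 : ∀ x : ℝ, |x - L| ≤ ℓ → q x = Real.cos ((x - (L - ℓ)) * Real.pi / (4 * ℓ)))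
    (hq4 : ∀ x : ℝ, ¬ |x| ≤ ℓ → ¬ (ℓ < x ∧ x < L - ℓ) → ¬ |x - L| ≤ ℓ → q x = 0)
    (d : ℕ) (hd : 1 ≤ d)
    (h : (Fin d → ℝ) → ℝ) (hh : ∀ x, h x = ∏ α : Fin d, q (x α))
    (φ : (Fin d → ℝ) → ℂ) (hφ_meas : Measurable φ)
    (hφ_per : ∀ (x : Fin d → ℝ) (α : Fin d), φ (x + L • (Pi.single α 1 : Fin d → ℝ)) = φ x)
    (hφ_int : IntegrableOn (fun x => ‖φ x‖ ^ 2)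
      (Set.univ.pi fun _ : Fin d => Set.Icc 0 L)) :
    (∫ x in Set.univ.pi fun _ : Fin d => Set.Icc (-ℓ) (L + ℓ),
        h x ^ 2 * ‖φ x‖ ^ 2) =
      ∫ x in Set.univ.pi fun _ : Fin d => Set.Icc (0 : ℝ) L,
        ‖φ x‖ ^ 2 := by
  classical
  have hℓ0 : ℓ ≠ 0 := ne_of_gt hℓ
  have hL0 : (0:ℝ) < L := by linarith
  have hlL : ℓ < L := by linarith
  -- measurability of q
  have hq_eq : q = fun x => if |x| ≤ ℓ then Real.cos ((x - ℓ) * Real.pi / (4 * ℓ))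
      else if ℓ < x ∧ x < L - ℓ then 1
      else if |x - L| ≤ ℓ then Real.cos ((x - (L - ℓ)) * Real.pi / (4 * ℓ)) else 0 := by
    funext x
    by_cases h1 : |x| ≤ ℓ
    · rw [if_pos h1]; exact hq1 x h1
    · rw [if_neg h1]
      by_cases h2 : ℓ < x ∧ x < L - ℓ
      · rw [if_pos h2]; exact hq2 x h2.1 h2.2
      · rw [if_neg h2]
        by_cases h3 : |x - L| ≤ ℓ
        · rw [if_pos h3]; exact hq3 x h3
        · rw [if_neg h3]; exact hq4 x h1 h2 h3
  have hqm : Measurable q := by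
    rw [hq_eq]
    refine Measurable.ite (measurableSet_le continuous_abs.measurable measurable_const)
      (Real.continuous_cos.measurable.comp
        (((measurable_id.sub_const ℓ).mul_const Real.pi).div_const (4 * ℓ))) ?_
    refine Measurable.ite ((measurableSet_lt measurable_const measurable_id).inter
      (measurableSet_lt measurable_id measurable_const)) measurable_const ?_
    exact Measurable.ite (measurableSet_le
        (continuous_abs.measurable.comp (measurable_id.sub_const L)) measurable_const)
      (Real.continuous_cos.measurable.comp
        (((measurable_id.sub_const (L - ℓ)).mul_const Real.pi).div_const (4 * ℓ)))
      measurable_const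
  set g : ℝ → ENNReal := fun t => ENNReal.ofReal (q t ^ 2) with hg_def
  have hgm : Measurable g := ENNReal.measurable_ofReal.comp (hqm.pow_const 2)
  -- q is bounded by 1 and vanishes far away
  have hqsq : ∀ t : ℝ, q t ^ 2 ≤ 1 := by
    intro t
    rw [hq_eq]
    simp only
    split_ifs
    · exact Real.cos_sq_le_one _
    · norm_num
    · exact Real.cos_sq_le_one _
    · norm_num
  have hqout : ∀ t : ℝ, t ∉ Icc (-ℓ) (L + ℓ) → q t = 0 := by
    intro t ht
    rw [mem_Icc] at ht
    push_neg at ht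
    rcases lt_or_ge t (-ℓ) with hc | hc
    · apply hq4
      · rw [abs_le]; push_neg; intro h'; linarith
      · push_neg; intro h'; linarith
      · rw [abs_le]; push_neg; intro h'; linarith
    · have hc2 : L + ℓ < t := ht hc
      apply hq4
      · rw [abs_le]; push_neg; intro h'; linarith
      · push_neg; intro h'; linarith
      · rw [abs_le]; push_neg; intro h'; linarith
  -- the weighted measure is finite
  haveI hfin : IsFiniteMeasure ((volume : Measure ℝ).withDensity g) := by
    refine ⟨?_⟩
    rw [withDensity_apply _ MeasurableSet.univ, Measure.restrict_univ]
    have hle : ∀ t : ℝ, g t ≤ (Icc (-ℓ) (L + ℓ)).indicator (1 : ℝ → ENNReal) t := by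
      intro t
      by_cases ht : t ∈ Icc (-ℓ) (L + ℓ)
      · rw [Set.indicator_of_mem ht]
        simpa [hg_def] using ENNReal.ofReal_le_one.2 (hqsq t)
      · rw [Set.indicator_of_notMem ht]
        simp [hg_def, hqout t ht]
    calc ∫⁻ t, g t ≤ ∫⁻ t, (Icc (-ℓ) (L + ℓ)).indicator (1 : ℝ → ENNReal) t :=
          lintegral_mono hle
      _ = volume (Icc (-ℓ) (L + ℓ)) := lintegral_indicator_one measurableSet_Icc
      _ < ⊤ := by rw [Real.volume_Icc]; exact ENNReal.ofReal_lt_top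
  -- measure preserving maps
  have mp1 : MeasurePreserving (fun t : ℝ => t - L * ⌊t / L⌋)
      ((volume : Measure ℝ).withDensity g) ((volume : Measure ℝ).restrict (Set.Ico 0 L)) :=
    one_dim_mp ℓ L hℓ hL q hq1 hq2 hq3 hq4 hqm
  have mpd : MeasurePreserving (fun (a : Fin d → ℝ) (i : Fin d) => a i - L * ⌊a i / L⌋)
      (Measure.pi fun _ : Fin d => (volume : Measure ℝ).withDensity g)
      (Measure.pi fun _ : Fin d => (volume : Measure ℝ).restrict (Set.Ico 0 L)) :=
    measurePreserving_pi _ _ fun _ => mp1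
  -- periodicity of φ under the coordinatewise reduction
  have hper_neg : ∀ (y : Fin d → ℝ) (α : Fin d), φ (y - L • (Pi.single α 1 : Fin d → ℝ)) = φ y := by
    intro y α
    have := hφ_per (y - L • (Pi.single α 1 : Fin d → ℝ)) α
    rw [sub_add_cancel] at this
    exact this.symm
  have hper_z : ∀ (n : ℤ) (y : Fin d → ℝ) (α : Fin d),
      φ (y + n • (L • (Pi.single α 1 : Fin d → ℝ))) = φ y := by
    intro n
    induction n using Int.induction_on with
    | zero => intro y α; simp
    | succ k ih =>
        intro y α
        have heq : y + ((k : ℤ) + 1) • (L • (Pi.single α 1 : Fin d → ℝ))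
            = (y + (k : ℤ) • (L • (Pi.single α 1 : Fin d → ℝ))) + L • (Pi.single α 1 : Fin d → ℝ) := by
          rw [add_zsmul, one_zsmul, ← add_assoc]
        rw [heq, hφ_per, ih]
    | pred k ih =>
        intro y α
        have heq : y + (-(k : ℤ) - 1) • (L • (Pi.single α 1 : Fin d → ℝ))
            = (y + (-(k : ℤ)) • (L • (Pi.single α 1 : Fin d → ℝ))) - L • (Pi.single α 1 : Fin d → ℝ) := by
          rw [sub_zsmul, one_zsmul]
          abel
        rw [heq, hper_neg, ih]
  have hsum : ∀ (m : Fin d → ℤ) (s : Finset (Fin d)) (y : Fin d → ℝ),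
      φ (y + ∑ α ∈ s, m α • (L • (Pi.single α 1 : Fin d → ℝ))) = φ y := by
    intro m s
    induction s using Finset.induction_on with
    | empty => intro y; simp
    | @insert a s' ha ih =>
        intro y
        rw [Finset.sum_insert ha]
        have heq : y + (m a • (L • (Pi.single a 1 : Fin d → ℝ))
              + ∑ α ∈ s', m α • (L • (Pi.single α 1 : Fin d → ℝ)))
            = (y + ∑ α ∈ s', m α • (L • (Pi.single α 1 : Fin d → ℝ)))
              + m a • (L • (Pi.single a 1 : Fin d → ℝ)) := by abel
        rw [heq, hper_z, ih]
  have hTper : ∀ x : Fin d → ℝ, φ (fun i => x i - L * ⌊x i / L⌋) = φ x := by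
    intro x
    have hx : (fun i => x i - L * ⌊x i / L⌋)
        = x + ∑ α : Fin d, (-⌊x α / L⌋) • (L • (Pi.single α 1 : Fin d → ℝ)) := by
      funext i
      rw [Pi.add_apply, Finset.sum_apply]
      have hterm : ∀ α : Fin d, ((-⌊x α / L⌋) • (L • (Pi.single α 1 : Fin d → ℝ))) i
          = if i = α then (-⌊x α / L⌋ : ℝ) * L else 0 := by
        intro α
        rw [Pi.smul_apply, Pi.smul_apply, Pi.single_apply]
        by_cases hiα : i = α
        · rw [if_pos hiα, if_pos hiα, smul_eq_mul, mul_one, zsmul_eq_mul]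
          push_cast
          ring
        · rw [if_neg hiα, if_neg hiα, smul_eq_mul, mul_zero, zsmul_eq_mul, mul_zero]
      rw [Finset.sum_congr rfl fun α _ => hterm α, Finset.sum_ite_eq]
      simp only [Finset.mem_univ, if_true]
      push_cast
      ring
    rw [hx, hsum]
  -- collapse everything at the level of lower integrals
  set F : (Fin d → ℝ) → ENNReal := fun x => ENNReal.ofReal (‖φ x‖ ^ 2) with hF_def
  have habs : Measurable fun x : Fin d → ℝ => ‖φ x‖ ^ 2 :=
    hφ_meas.norm.pow_const 2
  have hFm : Measurable F := ENNReal.measurable_ofReal.comp habs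
  have hm : Measurable h := by
    have : h = fun x => ∏ α : Fin d, q (x α) := funext hh
    rw [this]
    exact Finset.measurable_prod _ fun i _ => hqm.comp (measurable_pi_apply i)
  have hS₁ : MeasurableSet (Set.univ.pi fun _ : Fin d => Set.Icc (-ℓ) (L + ℓ)) :=
    MeasurableSet.univ_pi fun _ => measurableSet_Icc
  have key : (∫⁻ x in Set.univ.pi fun _ : Fin d => Set.Icc (-ℓ) (L + ℓ),
        ENNReal.ofReal (h x ^ 2 * ‖φ x‖ ^ 2))
      = ∫⁻ x in Set.univ.pi fun _ : Fin d => Set.Icc (0:ℝ) L, F x := by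
    have step_a : (∫⁻ x in Set.univ.pi fun _ : Fin d => Set.Icc (-ℓ) (L + ℓ),
          ENNReal.ofReal (h x ^ 2 * ‖φ x‖ ^ 2))
        = ∫⁻ x, (∏ i, g (x i)) * F x := by
      rw [← lintegral_indicator hS₁ _]
      refine lintegral_congr fun x => ?_
      by_cases hx : x ∈ Set.univ.pi fun _ : Fin d => Set.Icc (-ℓ) (L + ℓ)
      · rw [Set.indicator_of_mem hx, ENNReal.ofReal_mul (sq_nonneg _), hh x,
          ← Finset.prod_pow, ENNReal.ofReal_prod_of_nonneg fun i _ => sq_nonneg _]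
      · rw [Set.indicator_of_notMem hx]
        have : ∃ i, x i ∉ Set.Icc (-ℓ) (L + ℓ) := by
          by_contra hc
          push_neg at hc
          exact hx fun i _ => hc i
        obtain ⟨i, hi⟩ := this
        have : g (x i) = 0 := by simp [hg_def, hqout _ hi]
        rw [Finset.prod_eq_zero (Finset.mem_univ i) this, zero_mul]
    have step_c : (∫⁻ x, (∏ i, g (x i)) * F x)
        = ∫⁻ x, F x ∂((Measure.pi fun _ : Fin d => (volume : Measure ℝ)).withDensity
            fun x => ∏ i, g (x i)) := by
      have hprod : Measurable fun x : Fin d → ℝ => ∏ i, g (x i) :=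
        Finset.measurable_prod _ fun i _ => hgm.comp (measurable_pi_apply i)
      rw [volume_pi]
      exact (lintegral_withDensity_eq_lintegral_mul _ hprod hFm).symm
    have step_d : (∫⁻ x, F x ∂((Measure.pi fun _ : Fin d => (volume : Measure ℝ)).withDensity
          fun x => ∏ i, g (x i)))
        = ∫⁻ x, F x ∂(Measure.pi fun _ : Fin d => (volume : Measure ℝ).withDensity g) := by
      rw [pi_withDensity' d g hgm]
    have step_ef : (∫⁻ x, F x ∂(Measure.pi fun _ : Fin d => (volume : Measure ℝ).withDensity g))
        = ∫⁻ x, F x ∂(Measure.pi fun _ : Fin d => (volume : Measure ℝ).restrict (Set.Ico 0 L)) := by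
      rw [← mpd.lintegral_comp hFm]
      refine lintegral_congr fun x => ?_
      simp only [hF_def]
      rw [hTper]
    have step_g : (∫⁻ x, F x ∂(Measure.pi fun _ : Fin d =>
          (volume : Measure ℝ).restrict (Set.Ico 0 L)))
        = ∫⁻ x in Set.univ.pi fun _ : Fin d => Set.Icc (0:ℝ) L, F x := by
      rw [pi_restrict' d _ measurableSet_Ico]
      have hae : (Set.univ.pi fun _ : Fin d => Set.Ico (0:ℝ) L)
          =ᵐ[Measure.pi fun _ : Fin d => (volume : Measure ℝ)]
          (Set.univ.pi fun _ : Fin d => Set.Icc (0:ℝ) L) :=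
        Measure.pi_Ico_ae_eq_pi_Icc
      rw [setLIntegral_congr hae, volume_pi]
    rw [step_a, step_c, step_d, step_ef, step_g]
  rw [integral_eq_lintegral_of_nonneg_ae
      (Filter.Eventually.of_forall fun x => mul_nonneg (sq_nonneg _) (sq_nonneg _))
      ((hm.pow_const 2).mul habs).aestronglyMeasurable,
    integral_eq_lintegral_of_nonneg_ae
      (Filter.Eventually.of_forall fun x => sq_nonneg _)
      habs.aestronglyMeasurable]
  exact congrArg ENNReal.toReal key
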